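/- The set of solutions (p2, p3, p4, p5, p6, p15, p10, p12, p41, p43, p45, p119) ∈ ℚ^12 with all coordinates nonzero of the system p41 = p10^3·p12, p43 = p10^2·p12^2, p45 = p10·p12^3, p119 = p41·p43·p10^2·p12^3, p119 = p10^12, p119 = p12^10, p119 = p2^60, p119 = p3^40, p119 = p4^30, p119 = p5^20, p119 = p6^20, p119 = p15^8 forms, under componentwise multiplication, a group of order exactly 128 in which every element squares to the identity; hence it is isomorphic to (ℤ/2ℤ)^7. -/

import Mathlib

/-- Remark 3.3, algebra (ΛU₅, δ₅): nonzero solutions (tuples `Fin 12 → ℚˣ`,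
coordinates `p 0 = p2`, `p 1 = p3`, `p 2 = p4`, `p 3 = p5`, `p 4 = p6`, `p 5 = p15`, `p 6 = p10`, `p 7 = p12`, `p 8 = p41`, `p 9 = p43`, `p 10 = p45`, `p 11 = p119`)
form a group of order 128 under componentwise multiplication in which every
element squares to the identity; hence it is isomorphic to (ℤ/2ℤ)^7. -/

private lemma stmt10_pow11 (u : ℚˣ) (h : u ^ 11 = 1) : u = 1 := by
  have h' : (u:ℚ) ^ 11 = 1 := by
    have := congrArg Units.val h; push_cast at this; exact this
  exact Units.ext <| (Odd.strictMono_pow (R := ℚ) (by decide : Odd 11)).injective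
    (a₁ := (u:ℚ)) (a₂ := 1) (by simpa using h')

private lemma stmt10_pm (u : ℚˣ) (n : ℕ) (hn : n ≠ 0) (h : u ^ n = 1) : u = 1 ∨ u = -1 := by
  have h' : (u:ℚ) ^ n = 1 := by
    have := congrArg Units.val h; push_cast at this; exact this
  have habs : |(u:ℚ)| ^ n = 1 ^ n := by rw [← abs_pow, h', abs_one, one_pow]
  have h1 : |(u:ℚ)| = 1 :=
    (pow_left_strictMonoOn₀ hn).injOn (by exact abs_nonneg (u:ℚ)) (by norm_num) habs
  rcases (abs_eq (by norm_num : (0:ℚ) ≤ 1)).1 h1 with h2 | h2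
  · exact Or.inl (Units.ext (by simpa using h2))
  · exact Or.inr (Units.ext (by simpa using h2))

private def stmt10_sgn (c : ZMod 2) : ℚˣ := if c = 0 then 1 else -1

private lemma stmt10_neg_one_ne : (-1 : ℚˣ) ≠ 1 := by
  intro h; have := congrArg Units.val h; norm_num at this

private lemma stmt10_sgn_add (c d : ZMod 2) :
    stmt10_sgn (c + d) = stmt10_sgn c * stmt10_sgn d := by
  fin_cases c <;> fin_cases d <;> simp [stmt10_sgn] <;> decide

private lemma stmt10_sgn_sq (c : ZMod 2) : stmt10_sgn c ^ 2 = 1 := by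
  fin_cases c <;> simp [stmt10_sgn]

private lemma stmt10_sgn_inj : Function.Injective stmt10_sgn := by
  intro c d h
  fin_cases c <;> fin_cases d <;> simp_all [stmt10_sgn] <;>
    first | rfl | exact absurd h.symm stmt10_neg_one_ne | exact absurd h stmt10_neg_one_ne

private def stmt10_F : Multiplicative (Fin 7 → ZMod 2) →* (Fin 12 → ℚˣ) where
  toFun c := ![stmt10_sgn (c.toAdd 0), stmt10_sgn (c.toAdd 1), stmt10_sgn (c.toAdd 2),
    stmt10_sgn (c.toAdd 3), stmt10_sgn (c.toAdd 4), stmt10_sgn (c.toAdd 5), 1,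
    stmt10_sgn (c.toAdd 6), stmt10_sgn (c.toAdd 6), 1, stmt10_sgn (c.toAdd 6), 1]
  map_one' := by
    funext i; fin_cases i <;> rfl
  map_mul' c d := by
    funext i
    fin_cases i <;> first | rfl | exact stmt10_sgn_add _ _ | exact (mul_one 1).symm

private lemma stmt10_sgn_even (c : ZMod 2) (n : ℕ) : stmt10_sgn c ^ (2 * n) = 1 := by
  rw [pow_mul, stmt10_sgn_sq, one_pow]

private lemma stmt10_sgn_chi (u : ℚˣ) (h : u = 1 ∨ u = -1) :
    stmt10_sgn (if u = 1 then 0 else 1) = u := by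
  rcases h with h | h <;> subst h
  · simp [stmt10_sgn]
  · rw [if_neg stmt10_neg_one_ne]
    simp [stmt10_sgn]

theorem stmt_10 :
    ∃ H : Subgroup (Fin 12 → ℚˣ),
      (H : Set (Fin 12 → ℚˣ)) =
        {p : Fin 12 → ℚˣ | p 8 = p 6 ^ 3 * p 7 ∧
        p 9 = p 6 ^ 2 * p 7 ^ 2 ∧
        p 10 = p 6 * p 7 ^ 3 ∧
        p 11 = p 8 * p 9 * p 6 ^ 2 * p 7 ^ 3 ∧
        p 11 = p 6 ^ 12 ∧
        p 11 = p 7 ^ 10 ∧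
        p 11 = p 0 ^ 60 ∧
        p 11 = p 1 ^ 40 ∧
        p 11 = p 2 ^ 30 ∧
        p 11 = p 3 ^ 20 ∧
        p 11 = p 4 ^ 20 ∧
        p 11 = p 5 ^ 8} ∧
      Nat.card H = 128 ∧
      (∀ x ∈ H, x * x = 1) ∧
      Nonempty (H ≃* Multiplicative (Fin 7 → ZMod 2)) := by
  have hinj : Function.Injective stmt10_F := by
    intro c d h
    refine Multiplicative.toAdd.injective (funext fun i => ?_)
    fin_cases i
    exacts [stmt10_sgn_inj (congrFun h 0), stmt10_sgn_inj (congrFun h 1),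
      stmt10_sgn_inj (congrFun h 2), stmt10_sgn_inj (congrFun h 3),
      stmt10_sgn_inj (congrFun h 4), stmt10_sgn_inj (congrFun h 5),
      stmt10_sgn_inj (congrFun h 7)]
  let e := MonoidHom.ofInjective hinj
  refine ⟨stmt10_F.range, ?_, ?_, ?_, ⟨e.symm⟩⟩
  · ext p
    simp only [SetLike.mem_coe, MonoidHom.mem_range, Set.mem_setOf_eq]
    constructor
    · rintro ⟨c, rfl⟩
      set s := stmt10_sgn (c.toAdd 6) with hs
      refine ⟨?_, ?_, ?_, ?_, ?_, ?_, ?_, ?_, ?_, ?_, ?_, ?_⟩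
      · show s = 1 ^ 3 * s; rw [one_pow, one_mul]
      · show (1 : ℚˣ) = 1 ^ 2 * s ^ 2; rw [hs, stmt10_sgn_sq]; norm_num
      · show s = 1 * s ^ 3
        rw [one_mul, pow_succ, hs, stmt10_sgn_sq, one_mul]
      · show (1 : ℚˣ) = s * 1 * 1 ^ 2 * s ^ 3
        rw [mul_one, one_pow, mul_one]
        calc (1 : ℚˣ) = s ^ (2 * 2) := by rw [hs, stmt10_sgn_even]
          _ = s * s ^ 3 := by rw [← pow_succ']
      · show (1 : ℚˣ) = 1 ^ 12; rw [one_pow]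
      · show (1 : ℚˣ) = s ^ 10
        rw [hs, show (10 : ℕ) = 2 * 5 from rfl, stmt10_sgn_even]
      · show (1 : ℚˣ) = stmt10_sgn (c.toAdd 0) ^ 60
        rw [show (60 : ℕ) = 2 * 30 from rfl, stmt10_sgn_even]
      · show (1 : ℚˣ) = stmt10_sgn (c.toAdd 1) ^ 40
        rw [show (40 : ℕ) = 2 * 20 from rfl, stmt10_sgn_even]
      · show (1 : ℚˣ) = stmt10_sgn (c.toAdd 2) ^ 30
        rw [show (30 : ℕ) = 2 * 15 from rfl, stmt10_sgn_even]
      · show (1 : ℚˣ) = stmt10_sgn (c.toAdd 3) ^ 20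
        rw [show (20 : ℕ) = 2 * 10 from rfl, stmt10_sgn_even]
      · show (1 : ℚˣ) = stmt10_sgn (c.toAdd 4) ^ 20
        rw [show (20 : ℕ) = 2 * 10 from rfl, stmt10_sgn_even]
      · show (1 : ℚˣ) = stmt10_sgn (c.toAdd 5) ^ 8
        rw [show (8 : ℕ) = 2 * 4 from rfl, stmt10_sgn_even]
    · rintro ⟨h1, h2, h3, h4, h5, h6, h7, h8, h9, h10, h11, h12⟩
      have hval : ∀ (u : ℚˣ) (n : ℕ), ((u ^ n : ℚˣ) : ℚ) = (u : ℚ) ^ n := by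
        intro u n; push_cast; ring
      set A : ℚ := (p 6 : ℚ) with hA'
      set B : ℚ := (p 7 : ℚ) with hB'
      have hA : A ≠ 0 := Units.ne_zero _
      have e1 : ((p 11 : ℚˣ) : ℚ) = A ^ 7 * B ^ 6 := by
        have := congrArg Units.val h4
        rw [h1, h2] at this
        push_cast at this
        rw [this]; ring
      have e5 : ((p 11 : ℚˣ) : ℚ) = A ^ 12 := by
        have := congrArg Units.val h5; push_cast at this; exact this
      have e6 : ((p 11 : ℚˣ) : ℚ) = B ^ 10 := by
        have := congrArg Units.val h6; push_cast at this; exact this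
      have hb6 : B ^ 6 = A ^ 5 := by
        have h' : A ^ 7 * B ^ 6 = A ^ 7 * A ^ 5 := by
          rw [← e1, e5]; ring
        exact mul_left_cancel₀ (pow_ne_zero 7 hA) h'
      have hA11 : A ^ 11 = 1 := by
        have h36 : A ^ 36 = A ^ 25 := by
          calc A ^ 36 = (A ^ 12) ^ 3 := by ring
            _ = (B ^ 10) ^ 3 := by rw [← e5, e6]
            _ = (B ^ 6) ^ 5 := by ring
            _ = (A ^ 5) ^ 5 := by rw [hb6]
            _ = A ^ 25 := by ring
        have h' : A ^ 25 * A ^ 11 = A ^ 25 * 1 := by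
          rw [mul_one]
          calc A ^ 25 * A ^ 11 = A ^ 36 := by ring
            _ = A ^ 25 := h36
        exact mul_left_cancel₀ (pow_ne_zero 25 hA) h'
      have u6 : p 6 = 1 := by
        refine stmt10_pow11 _ (Units.ext ?_)
        rw [hval]; simpa using hA11
      have hp11 : p 11 = 1 := by rw [h5, u6, one_pow]
      have hp7 : p 7 = 1 ∨ p 7 = -1 :=
        stmt10_pm _ 10 (by norm_num) (by rw [← h6, hp11])
      have hp7sq : p 7 ^ 2 = 1 := by
        rcases hp7 with h | h <;> rw [h] <;> norm_num
      have hp8 : p 8 = p 7 := by rw [h1, u6, one_pow, one_mul]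
      have hp9 : p 9 = 1 := by rw [h2, u6, one_pow, one_mul, hp7sq]
      have hp10 : p 10 = p 7 := by
        rw [h3, u6, one_mul, pow_succ, hp7sq, one_mul]
      have hp0 : p 0 = 1 ∨ p 0 = -1 :=
        stmt10_pm _ 60 (by norm_num) (by rw [← h7, hp11])
      have hp1 : p 1 = 1 ∨ p 1 = -1 :=
        stmt10_pm _ 40 (by norm_num) (by rw [← h8, hp11])
      have hp2 : p 2 = 1 ∨ p 2 = -1 :=
        stmt10_pm _ 30 (by norm_num) (by rw [← h9, hp11])
      have hp3 : p 3 = 1 ∨ p 3 = -1 :=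
        stmt10_pm _ 20 (by norm_num) (by rw [← h10, hp11])
      have hp4 : p 4 = 1 ∨ p 4 = -1 :=
        stmt10_pm _ 20 (by norm_num) (by rw [← h11, hp11])
      have hp5 : p 5 = 1 ∨ p 5 = -1 :=
        stmt10_pm _ 8 (by norm_num) (by rw [← h12, hp11])
      refine ⟨Multiplicative.ofAdd
        ![if p 0 = 1 then 0 else 1, if p 1 = 1 then 0 else 1, if p 2 = 1 then 0 else 1,
          if p 3 = 1 then 0 else 1, if p 4 = 1 then 0 else 1, if p 5 = 1 then 0 else 1,
          if p 7 = 1 then 0 else 1], ?_⟩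
      funext i
      fin_cases i
      exacts [stmt10_sgn_chi _ hp0, stmt10_sgn_chi _ hp1, stmt10_sgn_chi _ hp2,
        stmt10_sgn_chi _ hp3, stmt10_sgn_chi _ hp4, stmt10_sgn_chi _ hp5,
        u6.symm, stmt10_sgn_chi _ hp7,
        (stmt10_sgn_chi _ hp7).trans hp8.symm, hp9.symm,
        (stmt10_sgn_chi _ hp7).trans hp10.symm, hp11.symm]
  · rw [Nat.card_congr e.symm.toEquiv]
    simp [Nat.card_eq_fintype_card]
  · rintro x ⟨c, rfl⟩
    rw [← map_mul]
    have hcc : c * c = 1 := by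
      refine Multiplicative.toAdd.injective (funext fun i => ?_)
      exact (by decide : ∀ z : ZMod 2, z + z = 0) _
    rw [hcc, map_one]
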